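/- Let N ≥ 0 and let ν be a finite positive Borel measure on the unit circle 𝕋 whose support contains at least N+1 distinct points. If m_k = ∫_𝕋 z^k dν(z) for k = 0, …, N, then the Toeplitz matrix H_N(M_N) with M_N = (m_0, …, m_N) is positive definite. -/

import Mathlib

open MeasureTheory ComplexOrder
open Matrix

/-- Extension of the moment sequence to `ℤ` by the convention `m_{−k} = conj(m_k)`. -/
noncomputable def mz (m : ℕ → ℂ) : ℤ → ℂ :=
  fun k => if 0 ≤ k then m k.toNat else (starRingEnd ℂ) (m (-k).toNat)

/-- The Toeplitz matrix `H_N(M)` with entries `(H_N)_{jk} = m_{k−j}`. -/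
noncomputable def toeplitz (N : ℕ) (m : ℕ → ℂ) : Matrix (Fin (N + 1)) (Fin (N + 1)) ℂ :=
  fun j k => mz m ((k : ℤ) - (j : ℤ))

lemma ae_conj_mul (ν : Measure ℂ) (hcirc : ∀ᵐ z ∂ν, ‖z‖ = 1) :
    ∀ᵐ z ∂ν, (starRingEnd ℂ) z * z = 1 := by
  filter_upwards [hcirc] with z hz
  have h : z * (starRingEnd ℂ) z = (‖z‖ : ℂ) ^ 2 := by
    rw [Complex.mul_conj, Complex.normSq_eq_norm_sq]; push_cast; ring
  rw [mul_comm, h, hz]; norm_num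

lemma integrable_cpow (ν : Measure ℂ) [IsFiniteMeasure ν]
    (hcirc : ∀ᵐ z ∂ν, ‖z‖ = 1) (j k : ℕ) :
    Integrable (fun z => (starRingEnd ℂ) z ^ j * z ^ k) ν := by
  refine Integrable.mono' (integrable_const 1) ?_ ?_
  · exact ((Complex.continuous_conj.pow j).mul (continuous_pow k)).aestronglyMeasurable
  · filter_upwards [hcirc] with z hz
    simp [norm_mul, norm_pow, hz]

lemma toeplitz_entry (N : ℕ) (m : ℕ → ℂ) (ν : Measure ℂ) [IsFiniteMeasure ν]
    (hcirc : ∀ᵐ z ∂ν, ‖z‖ = 1)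
    (hmom : ∀ k ≤ N, m k = ∫ z, z ^ k ∂ν) (j k : ℕ) (hj : j ≤ N) (hk : k ≤ N) :
    mz m ((k : ℤ) - (j : ℤ)) = ∫ z, (starRingEnd ℂ) z ^ j * z ^ k ∂ν := by
  rcases le_or_gt j k with h | h
  · have h0 : (0 : ℤ) ≤ (k : ℤ) - j := by omega
    have ht : ((k : ℤ) - j).toNat = k - j := by omega
    rw [mz, if_pos h0, ht, hmom _ (le_trans (Nat.sub_le _ _) hk)]
    refine integral_congr_ae ?_
    filter_upwards [ae_conj_mul ν hcirc] with z hz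
    have hzk : z ^ k = z ^ j * z ^ (k - j) := by rw [← pow_add]; congr 1; omega
    rw [hzk, ← mul_assoc, ← mul_pow, hz, one_pow, one_mul]
  · have h0 : ¬ (0 : ℤ) ≤ (k : ℤ) - j := by omega
    have ht : (-((k : ℤ) - j)).toNat = j - k := by omega
    rw [mz, if_neg h0, ht, hmom _ (le_trans (Nat.sub_le _ _) hj), ← integral_conj]
    refine (integral_congr_ae ?_).symm
    filter_upwards [ae_conj_mul ν hcirc] with z hz
    have hzj : (starRingEnd ℂ) z ^ j = (starRingEnd ℂ) z ^ (j - k) * (starRingEnd ℂ) z ^ k := by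
      rw [← pow_add]; congr 1; omega
    rw [hzj, mul_assoc, ← mul_pow, hz, one_pow, mul_one, ← map_pow]

/-- If `ν` is a nonzero finite positive Borel measure concentrated on the unit circle whose
support contains at least `N+1` distinct points, and `m_k = ∫ z^k dν` for `k ≤ N`, then the
Toeplitz matrix `H_N(M_N)` is positive definite. -/
theorem toeplitz_posDef_of_support (N : ℕ) (m : ℕ → ℂ) (ν : Measure ℂ)
    [IsFiniteMeasure ν]
    (hcirc : ∀ᵐ z ∂ν, ‖z‖ = 1)
    (hsupp : ∃ z : Fin (N + 1) → ℂ, Function.Injective z ∧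
      ∀ α, ∀ U : Set ℂ, IsOpen U → z α ∈ U → 0 < ν U)
    (hmom : ∀ k ≤ N, m k = ∫ z, z ^ k ∂ν) :
    (toeplitz N m).PosDef := by
  obtain ⟨zp, hzinj, hzsupp⟩ := hsupp
  have hjN : ∀ j : Fin (N + 1), (j : ℕ) ≤ N := fun j => Nat.lt_succ_iff.mp j.isLt
  have hent : ∀ j k : Fin (N + 1), toeplitz N m j k
      = ∫ z, (starRingEnd ℂ) z ^ (j : ℕ) * z ^ (k : ℕ) ∂ν := fun j k =>
    toeplitz_entry N m ν hcirc hmom j k (hjN j) (hjN k)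
  -- the quadratic form formula
  have key : ∀ x : Fin (N + 1) → ℂ,
      dotProduct (star x) ((toeplitz N m) *ᵥ x)
        = ∫ z, ((‖∑ k : Fin (N + 1), x k * z ^ (k : ℕ)‖ ^ 2 : ℝ) : ℂ) ∂ν := by
    intro x
    have step1 : dotProduct (star x) ((toeplitz N m) *ᵥ x)
        = ∑ j : Fin (N + 1), ∑ k : Fin (N + 1),
            ∫ z, (starRingEnd ℂ) (x j) * ((starRingEnd ℂ) z ^ (j : ℕ) * z ^ (k : ℕ) * x k) ∂ν := by
      simp only [dotProduct, Matrix.mulVec, Pi.star_apply, RCLike.star_def, Finset.mul_sum]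
      refine Finset.sum_congr rfl fun j _ => Finset.sum_congr rfl fun k _ => ?_
      rw [hent, ← integral_mul_const, ← integral_const_mul]
    have hF : ∀ j k : Fin (N + 1), Integrable
        (fun z => (starRingEnd ℂ) (x j) * ((starRingEnd ℂ) z ^ (j : ℕ) * z ^ (k : ℕ) * x k)) ν :=
      fun j k => (((integrable_cpow ν hcirc j k).mul_const (x k)).const_mul _)
    rw [step1]
    calc ∑ j : Fin (N + 1), ∑ k : Fin (N + 1),
          ∫ z, (starRingEnd ℂ) (x j) * ((starRingEnd ℂ) z ^ (j : ℕ) * z ^ (k : ℕ) * x k) ∂ν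
        = ∑ j : Fin (N + 1), ∫ z, ∑ k : Fin (N + 1),
            (starRingEnd ℂ) (x j) * ((starRingEnd ℂ) z ^ (j : ℕ) * z ^ (k : ℕ) * x k) ∂ν :=
          Finset.sum_congr rfl fun j _ => (integral_finset_sum _ fun k _ => hF j k).symm
      _ = ∫ z, ∑ j : Fin (N + 1), ∑ k : Fin (N + 1),
            (starRingEnd ℂ) (x j) * ((starRingEnd ℂ) z ^ (j : ℕ) * z ^ (k : ℕ) * x k) ∂ν :=
          (integral_finset_sum _ fun j _ => integrable_finset_sum _ fun k _ => hF j k).symm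
      _ = ∫ z, ((‖∑ k : Fin (N + 1), x k * z ^ (k : ℕ)‖ ^ 2 : ℝ) : ℂ) ∂ν := ?_
    refine integral_congr_ae (Filter.Eventually.of_forall fun z => ?_)
    dsimp only
    have h1 : ∑ j : Fin (N + 1), ∑ k : Fin (N + 1),
        (starRingEnd ℂ) (x j) * ((starRingEnd ℂ) z ^ (j : ℕ) * z ^ (k : ℕ) * x k)
        = (∑ j : Fin (N + 1), (starRingEnd ℂ) (x j) * (starRingEnd ℂ) z ^ (j : ℕ))
          * (∑ k : Fin (N + 1), x k * z ^ (k : ℕ)) := by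
      rw [Finset.sum_mul_sum]
      exact Finset.sum_congr rfl fun j _ => Finset.sum_congr rfl fun k _ => by ring
    have h2 : ∑ j : Fin (N + 1), (starRingEnd ℂ) (x j) * (starRingEnd ℂ) z ^ (j : ℕ)
        = (starRingEnd ℂ) (∑ k : Fin (N + 1), x k * z ^ (k : ℕ)) := by
      rw [map_sum]; exact Finset.sum_congr rfl fun j _ => by rw [_root_.map_mul, _root_.map_pow]
    rw [h1, h2]
    set w := ∑ k : Fin (N + 1), x k * z ^ (k : ℕ)
    rw [mul_comm, Complex.mul_conj, Complex.normSq_eq_norm_sq]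
  rw [Matrix.posDef_iff_dotProduct_mulVec]
  constructor
  · -- Hermitian
    ext j k
    simp only [Matrix.conjTranspose_apply, RCLike.star_def, hent, ← integral_conj]
    refine integral_congr_ae (Filter.Eventually.of_forall fun z => ?_)
    dsimp only
    rw [_root_.map_mul, _root_.map_pow, _root_.map_pow, Complex.conj_conj]
    ring
  · intro x hx
    rw [key x]
    -- the polynomial z ↦ ∑ x k z^k does not vanish at some support point
    have hpne : ∃ α, ∑ k : Fin (N + 1), x k * zp α ^ (k : ℕ) ≠ 0 := by
      by_contra hall
      push_neg at hall
      exact hx (Matrix.eq_zero_of_forall_index_sum_mul_pow_eq_zero hzinj hall)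
    obtain ⟨α, hα⟩ := hpne
    -- the real integrand is integrable
    have hcont : Continuous fun z : ℂ => ∑ k : Fin (N + 1), x k * z ^ (k : ℕ) := by
      continuity
    have hint : Integrable (fun z => ‖∑ k : Fin (N + 1), x k * z ^ (k : ℕ)‖ ^ 2) ν := by
      refine Integrable.mono' (integrable_const ((∑ k : Fin (N + 1), ‖x k‖) ^ 2)) ?_ ?_
      · exact ((hcont.norm.pow 2)).aestronglyMeasurable
      · filter_upwards [hcirc] with z hz
        rw [Real.norm_eq_abs, abs_of_nonneg (by positivity)]
        refine pow_le_pow_left₀ (norm_nonneg _) ?_ 2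
        refine le_trans (norm_sum_le _ _) (Finset.sum_le_sum fun k _ => ?_)
        simp [norm_mul, norm_pow, hz]
    have hrpos : 0 < ∫ z, ‖∑ k : Fin (N + 1), x k * z ^ (k : ℕ)‖ ^ 2 ∂ν := by
      rcases lt_or_eq_of_le (integral_nonneg (μ := ν) (f := fun z => ‖∑ k : Fin (N + 1), x k * z ^ (k : ℕ)‖ ^ 2) fun z => sq_nonneg _) with h | h
      · exact h
      exfalso
      have hz0 : (fun z => ‖∑ k : Fin (N + 1), x k * z ^ (k : ℕ)‖ ^ 2) =ᵐ[ν] 0 :=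
        (integral_eq_zero_iff_of_nonneg (fun z => sq_nonneg _) hint).mp h.symm
      have hae : ∀ᵐ z ∂ν, ∑ k : Fin (N + 1), x k * z ^ (k : ℕ) = 0 := by
        filter_upwards [hz0] with z hz
        have h2 : ‖∑ k : Fin (N + 1), x k * z ^ (k : ℕ)‖ ^ 2 = 0 := hz
        have := pow_eq_zero_iff (n := 2) (by norm_num) |>.mp h2
        exact norm_eq_zero.mp this
      have hnull : ν {z : ℂ | ∑ k : Fin (N + 1), x k * z ^ (k : ℕ) ≠ 0} = 0 := by
        rw [ae_iff] at hae
        exact hae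
      have hopen : IsOpen {z : ℂ | ∑ k : Fin (N + 1), x k * z ^ (k : ℕ) ≠ 0} :=
        isOpen_ne.preimage hcont
      have := hzsupp α _ hopen hα
      rw [hnull] at this
      exact lt_irrefl 0 this
    have hcast : ∫ z, ((‖∑ k : Fin (N + 1), x k * z ^ (k : ℕ)‖ ^ 2 : ℝ) : ℂ) ∂ν
        = ((∫ z, ‖∑ k : Fin (N + 1), x k * z ^ (k : ℕ)‖ ^ 2 ∂ν : ℝ) : ℂ) :=
      integral_ofReal
    rw [hcast]
    exact Complex.zero_lt_real.mpr hrpos
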